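/- arXiv:2405.09436 — 4 statements merged into one kernel-verified Lean document; each statement's English description precedes it below -/
import Mathlib

section
/- Let f₁,…,f_M : ℝ^d → ℝ and 0 ≤ O < M. Define φ(θ) as the (O+1)-st largest value among f₁(θ),…,f_M(θ), and for each subset S ⊆ {1,…,M} of size M − O define φ_S(θ) = max_{m ∈ S} f_m(θ). Then inf φ = min over all such subsets S of inf φ_S. -/
/-!
The (O+1)-st largest of `M` values is the least possible maximum over `M - O` of them:
any `M - O` indices meet the `O + 1` indices carrying the largest values, and the
`M - O` indices carrying the smallest values have exactly this maximum. Since infima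
over `θ` commute, `inf φ = min_S inf φ_S`.
-/

/-- The (O+1)-st largest component of `z`: sort ascending with `Tuple.sort` and
take the entry at position `M - 1 - O`. -/
noncomputable def pctl {M : ℕ} (O : ℕ) (hO : O < M) (z : Fin M → ℝ) : ℝ :=
  z (Tuple.sort z ⟨M - 1 - O, by omega⟩)

open Finset

namespace Tuple

variable {α : Type*} [LinearOrder α] {n : ℕ}

/-- By pigeonhole, `S` meets the `n - k` indices at or above position `k` in the sorted order. -/
theorem sort_apply_le_sup' (z : Fin n → α) (k : Fin n) {S : Finset (Fin n)}
    (hS : S.Nonempty) (hk : (k : ℕ) < #S) : z (sort z k) ≤ S.sup' hS z := by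
  set σ := sort z
  have hT : #((Ici k).map σ.toEmbedding) = n - k := by simp
  obtain ⟨m, hm⟩ := inter_nonempty_of_card_lt_card_add_card
    (subset_univ S) (subset_univ ((Ici k).map σ.toEmbedding))
    (by rw [hT, card_univ, Fintype.card_fin]; omega)
  obtain ⟨hmS, hmT⟩ := mem_inter.mp hm
  obtain ⟨i, hki, rfl⟩ := mem_map.mp hmT
  exact (monotone_sort z (mem_Ici.mp hki)).trans (le_sup' z hmS)

theorem exists_card_eq_forall_le_sort_apply (z : Fin n → α) (k : Fin n) :
    ∃ S : Finset (Fin n), #S = k + 1 ∧ ∀ m ∈ S, z m ≤ z (sort z k) := by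
  refine ⟨(Iic k).map (sort z).toEmbedding, by simp, fun m hm => ?_⟩
  obtain ⟨i, hik, rfl⟩ := mem_map.mp hm
  exact monotone_sort z (mem_Iic.mp hik)

end Tuple

theorem pctl_eq_iInf_sup' {M O : ℕ} (hO : O < M) (z : Fin M → ℝ) :
    ((pctl O hO z : ℝ) : EReal) =
      ⨅ S : {S : Finset (Fin M) // S.card = M - O},
        ((S.1.sup' (card_pos.mp (by rw [S.2]; exact Nat.sub_pos_of_lt hO)) z : ℝ) : EReal) := by
  apply le_antisymm
  · refine le_iInf fun S => EReal.coe_le_coe_iff.mpr ?_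
    exact Tuple.sort_apply_le_sup' z _ _ (by simp only [S.2]; omega)
  · obtain ⟨S, hS, hle⟩ := Tuple.exists_card_eq_forall_le_sort_apply z ⟨M - 1 - O, by omega⟩
    refine iInf_le_of_le ⟨S, by simp only [hS]; omega⟩ (EReal.coe_le_coe_iff.mpr ?_)
    exact sup'_le _ _ hle

/-- inf of the percentile objective equals the minimum over all
subsets S of size M - O of the infimum of the S-fit objective. -/
theorem stmt_3 (d M O : ℕ) (hO : O < M) (fs : Fin M → (Fin d → ℝ) → ℝ) :
    (⨅ θ : Fin d → ℝ, ((pctl O hO (fun m => fs m θ) : ℝ) : EReal)) =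
      ⨅ S : {S : Finset (Fin M) // S.card = M - O},
        ⨅ θ : Fin d → ℝ,
          ((S.1.sup' (Finset.card_pos.mp (by rw [S.2]; omega)) (fun m => fs m θ) : ℝ) : EReal) := by
  rw [iInf_comm]
  exact iInf_congr fun θ => pctl_eq_iInf_sup' hO _
end

section
/- Let f₁,…,f_M : ℝ^d → ℝ be convex, T ⊆ {1,…,M} with |T| = M − O, and suppose d + 1 < M − O. If θ⋆ is a global minimizer of φ_T(θ) = max_{m ∈ T} f_m(θ), then there exists a subset S ⊆ T with |S| = d + 1 such that θ⋆ is a global minimizer of φ_S(θ) = max_{m ∈ S} f_m(θ). -/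
/-- If each f_m is convex, |T| = M - O, d + 1 < M - O, and θ⋆ globally
minimizes φ_T = max_{m ∈ T} f_m, then there is S ⊆ T with |S| = d + 1 such that θ⋆
globally minimizes φ_S = max_{m ∈ S} f_m. -/
theorem stmt_8 (d M O : ℕ) (hO : O < M) (hdim : d + 1 < M - O)
    (fs : Fin M → EuclideanSpace ℝ (Fin d) → ℝ)
    (hconv : ∀ m, ConvexOn ℝ Set.univ (fs m))
    (T : Finset (Fin M)) (hTcard : T.card = M - O) (hT : T.Nonempty)
    (θstar : EuclideanSpace ℝ (Fin d))
    (hmin : ∀ θ, T.sup' hT (fun m => fs m θstar) ≤ T.sup' hT (fun m => fs m θ)) :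
    ∃ S : Finset (Fin M), S ⊆ T ∧ S.card = d + 1 ∧ ∃ hS : S.Nonempty,
      ∀ θ, S.sup' hS (fun m => fs m θstar) ≤ S.sup' hS (fun m => fs m θ) := by
  classical
  set c : ℝ := T.sup' hT (fun m => fs m θstar) with hc
  set F : Fin M → Set (EuclideanSpace ℝ (Fin d)) := fun m => {θ | fs m θ < c} with hF
  -- the intersection over T is empty
  have hempty : ¬ (⋂ i ∈ T, F i).Nonempty := by
    rintro ⟨θ, hθ⟩
    simp only [Set.mem_iInter] at hθ
    have h1 : T.sup' hT (fun m => fs m θ) < c :=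
      Finset.sup'_lt_iff hT |>.mpr fun m hm => hθ m hm
    exact absurd (hmin θ) (not_le.mpr h1)
  -- contrapositive of Helly: some small subfamily has empty intersection
  have hconvF : ∀ i ∈ T, Convex ℝ (F i) := by
    intro i _
    have := (hconv i).convex_lt c
    simpa [Set.sep_univ] using this
  have hfd : Module.finrank ℝ (EuclideanSpace ℝ (Fin d)) = d :=
    finrank_euclideanSpace_fin
  have : ¬ ∀ I ⊆ T, I.card ≤ Module.finrank ℝ (EuclideanSpace ℝ (Fin d)) + 1 →
      (⋂ i ∈ I, F i).Nonempty := by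
    intro h
    exact hempty (Convex.helly_theorem' hconvF h)
  push_neg at this
  obtain ⟨I, hIT, hIcard, hIempty⟩ := this
  rw [hfd] at hIcard
  -- enlarge I to a subset S of T with exactly d+1 elements
  obtain ⟨S, hIS, hST, hScard⟩ := Finset.exists_subsuperset_card_eq hIT hIcard
    (by omega : d + 1 ≤ T.card)
  have hS : S.Nonempty := Finset.card_pos.mp (by omega)
  refine ⟨S, hST, hScard, hS, fun θ => ?_⟩
  -- LHS ≤ c
  have hle : S.sup' hS (fun m => fs m θstar) ≤ c :=
    Finset.sup'_le hS _ fun m hm => Finset.le_sup' (fun m => fs m θstar) (hST hm)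
  -- c ≤ RHS : θ is not in the intersection over S (which contains ⋂ over I... careful: I ⊆ S)
  have hSempty : ¬ θ ∈ ⋂ i ∈ S, F i := by
    intro hθ
    apply Set.not_nonempty_iff_eq_empty.mpr hIempty
    exact ⟨θ, Set.mem_iInter₂.mpr fun i hi => Set.mem_iInter₂.mp hθ i (hIS hi)⟩
  simp only [Set.mem_iInter, not_forall] at hSempty
  obtain ⟨m, hm, hmθ⟩ := hSempty
  have : c ≤ fs m θ := not_lt.mp (by simpa [hF] using hmθ)
  exact hle.trans (this.trans (Finset.le_sup' (fun m => fs m θ) hm))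
end

section
/- Let f₁,…,f_M : ℝ^d → ℝ be convex, 0 ≤ O < M, and d + 1 < M − O. Define φ(θ) as the (O+1)-st largest value among f₁(θ),…,f_M(θ). Then every global minimizer of φ is a global minimizer of φ_S(θ) = max_{m ∈ S} f_m(θ) for some subset S ⊆ {1,…,M} with |S| = d + 1. -/
open Finset Module

namespace Tuple

variable {α : Type*} [LinearOrder α] {n : ℕ} (z : Fin n → α) (j : Fin n)

theorem le_card_filter_le_sort : (j : ℕ) + 1 ≤ #{m | z m ≤ z (sort z j)} :=
  calc (j : ℕ) + 1 = #((Iic j).map (sort z).toEmbedding) := by simp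
    _ ≤ _ := card_le_card fun m hm => by
      obtain ⟨i, hi, rfl⟩ := mem_map.mp hm
      simpa using monotone_sort z (mem_Iic.mp hi)

theorem le_card_filter_sort_le : n - j ≤ #{m | z (sort z j) ≤ z m} :=
  calc n - j = #((Ici j).map (sort z).toEmbedding) := by simp
    _ ≤ _ := card_le_card fun m hm => by
      obtain ⟨i, hi, rfl⟩ := mem_map.mp hm
      simpa using monotone_sort z (mem_Ici.mp hi)

end Tuple

section Percentile

variable {M O : ℕ} (hO : O < M) (z : Fin M → ℝ)

theorem le_card_filter_le_pctl : M - O ≤ #{m | z m ≤ pctl O hO z} :=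
  le_trans (by dsimp only; omega) (Tuple.le_card_filter_le_sort z _)

theorem le_card_filter_pctl_le : O + 1 ≤ #{m | pctl O hO z ≤ z m} :=
  le_trans (by dsimp only; omega) (Tuple.le_card_filter_sort_le z _)

theorem pctl_lt_of_le_card_filter_lt {v : ℝ} (h : M - O ≤ #{m | z m < v}) : pctl O hO z < v := by
  by_contra! hv
  set below : Finset (Fin M) := {m | z m < v}
  set above : Finset (Fin M) := {m | pctl O hO z ≤ z m}
  have hdisj : Disjoint below above :=
    disjoint_filter.mpr fun m _ hlt hle => (hlt.trans_le (hv.trans hle)).false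
  have := card_le_univ (below ∪ above)
  rw [card_union_of_disjoint hdisj, Fintype.card_fin] at this
  have : O + 1 ≤ #above := le_card_filter_pctl_le hO z
  omega

end Percentile

theorem ConvexOn.exists_forall_lt_of_forall_card_eq {ι 𝕜 E β : Type*} [Field 𝕜] [LinearOrder 𝕜]
    [IsStrictOrderedRing 𝕜] [AddCommGroup E] [Module 𝕜 E] [FiniteDimensional 𝕜 E]
    [AddCommMonoid β] [PartialOrder β] [IsOrderedCancelAddMonoid β] [Module 𝕜 β]
    [PosSMulStrictMono 𝕜 β] {C : Set E} {f : ι → E → β} (hf : ∀ i, ConvexOn 𝕜 C (f i))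
    {t : Finset ι} (ht : finrank 𝕜 E + 1 ≤ #t) (v : β)
    (h : ∀ I ⊆ t, #I = finrank 𝕜 E + 1 → ∃ x ∈ C, ∀ i ∈ I, f i x < v) :
    ∃ x ∈ C, ∀ i ∈ t, f i x < v := by
  obtain ⟨x, hx⟩ := Convex.helly_theorem (F := fun i => {x ∈ C | f i x < v}) ht
    (fun i _ => (hf i).convex_lt v) fun I hIt hI => by
      obtain ⟨x, hxC, hx⟩ := h I hIt hI
      exact ⟨x, Set.mem_biInter fun i hi => ⟨hxC, hx i hi⟩⟩
  obtain ⟨i₀, hi₀⟩ := card_pos.mp (Nat.zero_lt_of_lt ht)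
  rw [Set.mem_iInter₂] at hx
  exact ⟨x, (hx i₀ hi₀).1, fun i hi => (hx i hi).2⟩

/-- Theorem 2: with convex residuals and d + 1 < M - O, every global
minimizer of the percentile objective φ is a global minimizer of φ_S for some
subset S of size d + 1. -/
theorem stmt_9 (d M O : ℕ) (hO : O < M) (hdim : d + 1 < M - O)
    (fs : Fin M → EuclideanSpace ℝ (Fin d) → ℝ)
    (hconv : ∀ m, ConvexOn ℝ Set.univ (fs m))
    (θstar : EuclideanSpace ℝ (Fin d))
    (hmin : ∀ θ, pctl O hO (fun m => fs m θstar) ≤ pctl O hO (fun m => fs m θ)) :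
    ∃ S : Finset (Fin M), S.card = d + 1 ∧ ∃ hS : S.Nonempty,
      ∀ θ, S.sup' hS (fun m => fs m θstar) ≤ S.sup' hS (fun m => fs m θ) := by
  by_contra! hcon
  set v := pctl O hO fun m => fs m θstar
  set T : Finset (Fin M) := {m | fs m θstar ≤ v}
  have hT : M - O ≤ #T := le_card_filter_le_pctl hO _
  obtain ⟨θ₀, -, hθ₀⟩ := ConvexOn.exists_forall_lt_of_forall_card_eq hconv (t := T)
    (by rw [finrank_euclideanSpace_fin]; omega) v fun I hIT hI => by
      rw [finrank_euclideanSpace_fin] at hI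
      obtain ⟨θ, hθ⟩ := hcon I hI (card_pos.mp (by omega))
      refine ⟨θ, Set.mem_univ θ, fun m hm => ?_⟩
      calc fs m θ ≤ I.sup' _ fun m => fs m θ := le_sup' (fun m => fs m θ) hm
        _ < I.sup' _ fun m => fs m θstar := hθ
        _ ≤ v := sup'_le _ _ fun m' hm' => (mem_filter.mp (hIT hm')).2
  have hθ₀T : T ⊆ ({m | fs m θ₀ < v} : Finset (Fin M)) := fun m hm =>
    mem_filter.mpr ⟨mem_univ m, hθ₀ m hm⟩
  exact (hmin θ₀).not_gt (pctl_lt_of_le_card_filter_lt hO _ (hT.trans (card_le_card hθ₀T)))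
end

section
/- With d = 1, O = 1, M = 4 and residuals f₁(θ) = −θ, f₂(θ) = θ, f₃(θ) = 1, f₄(θ) = −1 on ℝ, the percentile objective φ(θ) (second largest of the four values) satisfies inf φ = 0 with Argmin(φ) = {0}, while min over subsets S of size d+1 = 2 of inf_θ max_{m∈S} f_m(θ) equals −1, attained by S = {1,4} with Argmin(max{f₁, f₄}) = [1, ∞). -/
/-!
Sorting `![-θ, θ, 1, -1]` shows that its second largest entry is `min |θ| 1`, which is minimised
exactly at `θ = 0`, with value `0`. On the other hand, for every `θ` at most one of the four
residuals lies below `-1`, so every pair has maximum at least `-1`; the pair `{f₁, f₄}` reaches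
`max (-θ) (-1) = -1` exactly when `θ ≥ 1`.
-/

section Percentile

variable {M O : ℕ} (hO : O < M)

theorem pctl_eq_of_monotone_comp {z : Fin M → ℝ} (σ : Equiv.Perm (Fin M))
    (h : Monotone (z ∘ σ)) : pctl O hO z = z (σ ⟨M - 1 - O, by omega⟩) :=
  (congrFun (Tuple.comp_sort_eq_comp_iff_monotone.mpr h) _).symm

theorem pctl_comp_perm (z : Fin M → ℝ) (σ : Equiv.Perm (Fin M)) :
    pctl O hO (z ∘ σ) = pctl O hO z :=
  (pctl_eq_of_monotone_comp hO ((Tuple.sort (z ∘ σ)).trans σ)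
    (by exact Tuple.monotone_sort (z ∘ σ))).symm

end Percentile

theorem Finset.le_sup'_of_one_lt_card {ι α : Type*} [LinearOrder α] {s : Finset ι}
    (hs : 1 < s.card) (H : s.Nonempty) {z : ι → α} {c : α}
    (h : ∀ a b, z a < c → z b < c → a = b) :
    c ≤ s.sup' H z := by
  obtain ⟨a, ha, b, hb, hab⟩ := Finset.one_lt_card.mp hs
  by_contra! hlt
  rw [Finset.sup'_lt_iff] at hlt
  exact hab (h a b (hlt a ha) (hlt b hb))

theorem pctl_residuals_of_nonneg {θ : ℝ} (hθ : 0 ≤ θ) :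
    pctl 1 (by norm_num) ![-θ, θ, 1, -1] = min |θ| 1 := by
  rw [abs_of_nonneg hθ]
  rcases le_total θ 1 with h1 | h1
  · -- -1 ≤ -θ ≤ θ ≤ 1
    rw [pctl_eq_of_monotone_comp _ ⟨![3, 0, 1, 2], ![1, 2, 3, 0], by decide, by decide⟩
      (Fin.monotone_iff_le_succ.mpr fun i => by fin_cases i <;> simp <;> linarith)]
    simp [min_eq_left h1]
  · -- -θ ≤ -1 ≤ 1 ≤ θ
    rw [pctl_eq_of_monotone_comp _ ⟨![0, 3, 2, 1], ![0, 3, 2, 1], by decide, by decide⟩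
      (Fin.monotone_iff_le_succ.mpr fun i => by fin_cases i <;> simp <;> linarith)]
    simp [min_eq_right h1]

theorem pctl_residuals (θ : ℝ) : pctl 1 (by norm_num) ![-θ, θ, 1, -1] = min |θ| 1 := by
  rcases le_total 0 θ with hθ | hθ
  · exact pctl_residuals_of_nonneg hθ
  · have hswap : ![-θ, θ, 1, -1] = ![-(-θ), -θ, 1, -1] ∘ Equiv.swap 0 1 := by
      funext m; fin_cases m <;> simp [Equiv.swap_apply_of_ne_of_ne]
    rw [hswap, pctl_comp_perm, pctl_residuals_of_nonneg (neg_nonneg.mpr hθ), abs_neg]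

theorem setOf_isMin_min_abs_one : {θ : ℝ | ∀ θ', min |θ| 1 ≤ min |θ'| 1} = {0} := by
  ext θ
  simp only [Set.mem_ofPred_eq, Set.mem_singleton_iff]
  refine ⟨fun h => ?_, fun h θ' => ?_⟩
  · have h0 : min |θ| 1 ≤ 0 := by simpa using h 0
    exact abs_nonpos_iff.mp ((min_le_iff.mp h0).resolve_right (by norm_num))
  · simp [h]

theorem setOf_isMin_max_neg_neg_one :
    {θ : ℝ | ∀ θ', max (-θ) (-1) ≤ max (-θ') (-1)} = Set.Ici 1 := by
  ext θ
  simp only [Set.mem_ofPred_eq, Set.mem_Ici]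
  refine ⟨fun h => ?_, fun h θ' => ?_⟩
  · have := h 1
    simp only [max_self, max_le_iff] at this
    linarith
  · rw [max_eq_right (by linarith)]
    exact le_max_right _ _

theorem residuals_lt_neg_one_subsingleton (θ : ℝ) (a b : Fin 4)
    (ha : ![-θ, θ, 1, -1] a < -1) (hb : ![-θ, θ, 1, -1] b < -1) : a = b := by
  fin_cases a <;> fin_cases b <;> simp at ha hb ⊢ <;> linarith

/-- with d = 1, O = 1, M = 4 and f₁(θ) = −θ, f₂(θ) = θ, f₃ ≡ 1,
f₄ ≡ −1, the percentile objective φ (second largest value) has inf φ = 0 attained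
exactly at {0}, while the minimum over size-2 subsets S of inf max_{m ∈ S} f_m
equals −1, attained by S = {1,4}, whose max objective has Argmin = [1, ∞). -/
theorem stmt_18 (f : Fin 4 → ℝ → ℝ)
    (hf : f = ![fun θ => -θ, fun θ => θ, fun _ => 1, fun _ => -1]) :
    pctl 1 (by omega) (fun m => f m (0 : ℝ)) = 0 ∧
    ({θ : ℝ | ∀ θ', pctl 1 (by omega) (fun m => f m θ) ≤
        pctl 1 (by omega) (fun m => f m θ')} = {0}) ∧
    (⨅ S : {S : Finset (Fin 4) // S.card = 2}, ⨅ θ : ℝ,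
        ((S.1.sup' (Finset.card_pos.mp (by rw [S.2]; omega)) (fun m => f m θ) : ℝ) : EReal))
      = (-1 : EReal) ∧
    (⨅ θ : ℝ, ((max (f 0 θ) (f 3 θ) : ℝ) : EReal)) = (-1 : EReal) ∧
    ({θ : ℝ | ∀ θ', max (f 0 θ) (f 3 θ) ≤ max (f 0 θ') (f 3 θ')} = Set.Ici (1 : ℝ)) := by
  subst hf
  have hz : ∀ θ : ℝ, (fun m => ![fun θ => -θ, fun θ => θ, fun _ => 1, fun _ => -1] m θ) =
      ![-θ, θ, 1, -1] := fun θ => by funext m; fin_cases m <;> rfl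
  simp only [hz, pctl_residuals, Matrix.cons_val]
  refine ⟨by simp, setOf_isMin_min_abs_one, ?_, ?_, setOf_isMin_max_neg_neg_one⟩
  · refine le_antisymm (iInf₂_le_of_le ⟨{0, 3}, rfl⟩ 1 ?_) (le_iInf₂ fun S θ => ?_)
    · simp [Finset.sup'_insert]
    · rw [← EReal.coe_one, ← EReal.coe_neg, EReal.coe_le_coe_iff]
      exact Finset.le_sup'_of_one_lt_card (by rw [S.2]; norm_num) _
        (residuals_lt_neg_one_subsingleton θ)
  · refine le_antisymm (iInf_le_of_le 1 (by norm_num)) (le_iInf fun θ => ?_)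
    rw [← EReal.coe_one, ← EReal.coe_neg, EReal.coe_le_coe_iff]
    exact le_max_right _ _
end
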